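/- Let (A, ⊗, 1) be a tensor extriangulated category such that Rad(A) is a set. Then Rad(A) is a coherent frame: the greatest element A = rad(1) is compact, the meet of two compact elements rad(X) ∧ rad(Y) = rad(X ⊗ Y) is compact, and every radical thick tensor ideal is the join of the compact elements rad(X) for X in it. -/

import Mathlib

/-! Abstract setting for a tensor extriangulated category, at the level of
isomorphism classes of objects: the classes form a commutative monoid `C` under `⊗`
(with unit `1`), there is a zero object `zero`, a ternary relation `Tri X Y Z`
recording the extriangles `X → Y → Z ⤳`, and a relation `Summand X Y` recording
that `X` is a direct summand of `Y`. -/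

/-- A thick tensor ideal: a set of (iso-classes of) objects containing `0`, closed under
tensoring with arbitrary objects, under direct summands, and satisfying the 2-out-of-3
property with respect to extriangles. -/
structure ThickTensorIdeal (C : Type*) [CommMonoid C] (zero : C)
    (Tri : C → C → C → Prop) (Summand : C → C → Prop) where
  carrier : Set C
  zero_mem : zero ∈ carrier
  tensor_mem : ∀ (a : C) {x : C}, x ∈ carrier → a * x ∈ carrier
  summand_mem : ∀ {x y : C}, Summand x y → y ∈ carrier → x ∈ carrier
  ext₃ : ∀ {X Y Z : C}, Tri X Y Z → X ∈ carrier → Y ∈ carrier → Z ∈ carrier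
  ext₂ : ∀ {X Y Z : C}, Tri X Y Z → X ∈ carrier → Z ∈ carrier → Y ∈ carrier
  ext₁ : ∀ {X Y Z : C}, Tri X Y Z → Y ∈ carrier → Z ∈ carrier → X ∈ carrier

/-- A radical thick tensor ideal: a thick tensor ideal `I` such that `X^{⊗n} ∈ I` for
some `n ≥ 1` implies `X ∈ I`. -/
structure RadicalThickTensorIdeal (C : Type*) [CommMonoid C] (zero : C)
    (Tri : C → C → C → Prop) (Summand : C → C → Prop) extends
    ThickTensorIdeal C zero Tri Summand where
  radical : ∀ {x : C} {n : ℕ}, 1 ≤ n → x ^ n ∈ carrier → x ∈ carrier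

/-- The radical closure `rad(s)` of a set of objects: the intersection of the carriers of
all radical thick tensor ideals containing `s`. -/
def radClosure {C : Type*} [CommMonoid C] (zero : C)
    (Tri : C → C → C → Prop) (Summand : C → C → Prop) (s : Set C) : Set C :=
  ⋂₀ {t : Set C | (∃ I : RadicalThickTensorIdeal C zero Tri Summand, I.carrier = t) ∧ s ⊆ t}


section RadAux
open Set

variable {C : Type*} [CommMonoid C] (zero : C)
    (Tri : C → C → C → Prop) (Summand : C → C → Prop)

lemma mem_radClosure {s : Set C} {x : C} :
    x ∈ radClosure zero Tri Summand s ↔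
      ∀ I : RadicalThickTensorIdeal C zero Tri Summand, s ⊆ I.carrier → x ∈ I.carrier := by
  constructor
  · intro h I hI
    exact h I.carrier ⟨⟨I, rfl⟩, hI⟩
  · rintro h t ⟨⟨I, rfl⟩, hI⟩
    exact h I hI

lemma subset_radClosure (s : Set C) : s ⊆ radClosure zero Tri Summand s :=
  fun _ hx => (mem_radClosure _ _ _).2 fun _ hI => hI hx

lemma radClosure_subset {s : Set C} (I : RadicalThickTensorIdeal C zero Tri Summand)
    (h : s ⊆ I.carrier) : radClosure zero Tri Summand s ⊆ I.carrier :=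
  fun _ hx => (mem_radClosure _ _ _).1 hx I h

/-- The radical closure is itself a radical thick tensor ideal. -/
def radIdeal (s : Set C) : RadicalThickTensorIdeal C zero Tri Summand where
  carrier := radClosure zero Tri Summand s
  zero_mem := (mem_radClosure _ _ _).2 fun I _ => I.zero_mem
  tensor_mem := fun a {_} hx => (mem_radClosure _ _ _).2 fun I hI =>
    I.tensor_mem a ((mem_radClosure _ _ _).1 hx I hI)
  summand_mem := fun h hy => (mem_radClosure _ _ _).2 fun I hI =>
    I.summand_mem h ((mem_radClosure _ _ _).1 hy I hI)
  ext₃ := fun h hX hY => (mem_radClosure _ _ _).2 fun I hI =>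
    I.ext₃ h ((mem_radClosure _ _ _).1 hX I hI) ((mem_radClosure _ _ _).1 hY I hI)
  ext₂ := fun h hX hZ => (mem_radClosure _ _ _).2 fun I hI =>
    I.ext₂ h ((mem_radClosure _ _ _).1 hX I hI) ((mem_radClosure _ _ _).1 hZ I hI)
  ext₁ := fun h hY hZ => (mem_radClosure _ _ _).2 fun I hI =>
    I.ext₁ h ((mem_radClosure _ _ _).1 hY I hI) ((mem_radClosure _ _ _).1 hZ I hI)
  radical := fun hn hx => (mem_radClosure _ _ _).2 fun I hI =>
    I.radical hn ((mem_radClosure _ _ _).1 hx I hI)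

lemma radClosure_mono {s t : Set C} (h : s ⊆ t) :
    radClosure zero Tri Summand s ⊆ radClosure zero Tri Summand t :=
  radClosure_subset zero Tri Summand (radIdeal zero Tri Summand t)
    (h.trans (subset_radClosure zero Tri Summand t))

/-- "Division" of a radical thick tensor ideal by a fixed object. -/
def divIdeal (tensor_zero : ∀ a : C, a * zero = zero)
    (tri_tensor : ∀ (a : C) {X Y Z : C}, Tri X Y Z → Tri (a * X) (a * Y) (a * Z))
    (summand_tensor : ∀ (a : C) {X Y : C}, Summand X Y → Summand (a * X) (a * Y))
    (I : RadicalThickTensorIdeal C zero Tri Summand) (v : C) :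
    RadicalThickTensorIdeal C zero Tri Summand where
  carrier := {u | u * v ∈ I.carrier}
  zero_mem := by
    show zero * v ∈ I.carrier
    rw [mul_comm, tensor_zero]
    exact I.zero_mem
  tensor_mem := fun a {x} hx => by
    show a * x * v ∈ I.carrier
    rw [mul_assoc]
    exact I.tensor_mem a hx
  summand_mem := fun {x y} h hy => by
    have h2 := summand_tensor v h
    rw [mul_comm v x, mul_comm v y] at h2
    exact I.summand_mem h2 hy
  ext₃ := fun {X Y Z} h hX hY => by
    have h2 := tri_tensor v h
    rw [mul_comm v X, mul_comm v Y, mul_comm v Z] at h2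
    exact I.ext₃ h2 hX hY
  ext₂ := fun {X Y Z} h hX hZ => by
    have h2 := tri_tensor v h
    rw [mul_comm v X, mul_comm v Y, mul_comm v Z] at h2
    exact I.ext₂ h2 hX hZ
  ext₁ := fun {X Y Z} h hY hZ => by
    have h2 := tri_tensor v h
    rw [mul_comm v X, mul_comm v Y, mul_comm v Z] at h2
    exact I.ext₁ h2 hY hZ
  radical := fun {x n} hn hx => by
    show x * v ∈ I.carrier
    obtain ⟨m, rfl⟩ : ∃ m, n = m + 1 := ⟨n - 1, (Nat.succ_pred_eq_of_pos hn).symm⟩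
    have key : (x * v) ^ (m + 1) = v ^ m * (x ^ (m + 1) * v) := by
      rw [mul_pow, pow_succ v m, mul_left_comm]
    exact I.radical (Nat.le_add_left 1 m) (key ▸ I.tensor_mem (v ^ m) hx)

lemma mul_mem_rad (tensor_zero : ∀ a : C, a * zero = zero)
    (tri_tensor : ∀ (a : C) {X Y Z : C}, Tri X Y Z → Tri (a * X) (a * Y) (a * Z))
    (summand_tensor : ∀ (a : C) {X Y : C}, Summand X Y → Summand (a * X) (a * Y))
    {X Y U V : C}
    (hU : U ∈ radClosure zero Tri Summand {X}) (hV : V ∈ radClosure zero Tri Summand {Y}) :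
    U * V ∈ radClosure zero Tri Summand {X * Y} := by
  have h1 : V * X ∈ radClosure zero Tri Summand {X * Y} := by
    refine radClosure_subset zero Tri Summand
      (divIdeal zero Tri Summand tensor_zero tri_tensor summand_tensor
        (radIdeal zero Tri Summand {X * Y}) X) ?_ hV
    intro y hy
    rw [Set.mem_singleton_iff] at hy
    subst hy
    show y * X ∈ radClosure zero Tri Summand {X * y}
    rw [mul_comm]
    exact subset_radClosure zero Tri Summand _ rfl
  refine radClosure_subset zero Tri Summand
    (divIdeal zero Tri Summand tensor_zero tri_tensor summand_tensor
      (radIdeal zero Tri Summand {X * Y}) V) ?_ hU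
  intro x hx
  rw [Set.mem_singleton_iff] at hx
  subst hx
  show x * V ∈ radClosure zero Tri Summand {x * Y}
  rw [mul_comm x V]
  exact h1

/-- The "finite-support" ideal: elements lying in the radical closure of some finite
subset of `s`. -/
def finUnionIdeal (s : Set C) : RadicalThickTensorIdeal C zero Tri Summand where
  carrier := {x | ∃ F : Set C, F ⊆ s ∧ F.Finite ∧ x ∈ radClosure zero Tri Summand F}
  zero_mem := ⟨∅, empty_subset _, finite_empty, (radIdeal zero Tri Summand ∅).zero_mem⟩
  tensor_mem := fun a {_} hx => by
    obtain ⟨F, hFs, hFf, hx⟩ := hx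
    exact ⟨F, hFs, hFf, (radIdeal zero Tri Summand F).tensor_mem a hx⟩
  summand_mem := fun h hy => by
    obtain ⟨F, hFs, hFf, hy⟩ := hy
    exact ⟨F, hFs, hFf, (radIdeal zero Tri Summand F).summand_mem h hy⟩
  ext₃ := fun h hX hY => by
    obtain ⟨F1, h1s, h1f, h1⟩ := hX
    obtain ⟨F2, h2s, h2f, h2⟩ := hY
    exact ⟨F1 ∪ F2, union_subset h1s h2s, h1f.union h2f,
      (radIdeal zero Tri Summand (F1 ∪ F2)).ext₃ h
        (radClosure_mono zero Tri Summand subset_union_left h1)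
        (radClosure_mono zero Tri Summand subset_union_right h2)⟩
  ext₂ := fun h hX hZ => by
    obtain ⟨F1, h1s, h1f, h1⟩ := hX
    obtain ⟨F2, h2s, h2f, h2⟩ := hZ
    exact ⟨F1 ∪ F2, union_subset h1s h2s, h1f.union h2f,
      (radIdeal zero Tri Summand (F1 ∪ F2)).ext₂ h
        (radClosure_mono zero Tri Summand subset_union_left h1)
        (radClosure_mono zero Tri Summand subset_union_right h2)⟩
  ext₁ := fun h hY hZ => by
    obtain ⟨F1, h1s, h1f, h1⟩ := hY
    obtain ⟨F2, h2s, h2f, h2⟩ := hZ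
    exact ⟨F1 ∪ F2, union_subset h1s h2s, h1f.union h2f,
      (radIdeal zero Tri Summand (F1 ∪ F2)).ext₁ h
        (radClosure_mono zero Tri Summand subset_union_left h1)
        (radClosure_mono zero Tri Summand subset_union_right h2)⟩
  radical := fun hn hx => by
    obtain ⟨F, hFs, hFf, hx⟩ := hx
    exact ⟨F, hFs, hFf, (radIdeal zero Tri Summand F).radical hn hx⟩

end RadAux

/-- `Rad(A)` is a coherent frame: the top element is `rad(1)` (which equals everything),
the meet of the compact elements `rad(X)` and `rad(Y)` is `rad(X ⊗ Y)`, each `rad(X)` is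
compact, and every radical thick tensor ideal is the join of the compact elements `rad(X)`
for `X` in it. -/
theorem stmt_5 {C : Type*} [CommMonoid C] (zero : C)
    (Tri : C → C → C → Prop) (Summand : C → C → Prop)
    (tensor_zero : ∀ a : C, a * zero = zero)
    (tri_tensor : ∀ (a : C) {X Y Z : C}, Tri X Y Z → Tri (a * X) (a * Y) (a * Z))
    (summand_tensor : ∀ (a : C) {X Y : C}, Summand X Y → Summand (a * X) (a * Y)) :
    (radClosure zero Tri Summand {(1 : C)} = Set.univ) ∧
    (∀ X Y : C, radClosure zero Tri Summand {X} ∩ radClosure zero Tri Summand {Y} =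
        radClosure zero Tri Summand {X * Y}) ∧
    (∀ (X : C) (S : Set (RadicalThickTensorIdeal C zero Tri Summand)),
        radClosure zero Tri Summand {X} ⊆
            radClosure zero Tri Summand (⋃ J ∈ S, J.carrier) →
          ∃ T : Set (RadicalThickTensorIdeal C zero Tri Summand), T ⊆ S ∧ T.Finite ∧
            radClosure zero Tri Summand {X} ⊆
              radClosure zero Tri Summand (⋃ J ∈ T, J.carrier)) ∧
    (∀ I : RadicalThickTensorIdeal C zero Tri Summand,
        radClosure zero Tri Summand I.carrier = I.carrier) := by
  classical
  refine ⟨?_, ?_, ?_, ?_⟩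
  · apply Set.eq_univ_iff_forall.2
    intro a
    have h1 : (1 : C) ∈ radClosure zero Tri Summand {(1 : C)} :=
      subset_radClosure zero Tri Summand _ rfl
    have := (radIdeal zero Tri Summand {(1 : C)}).tensor_mem a h1
    simpa using (show a * 1 ∈ radClosure zero Tri Summand {(1 : C)} from this)
  · intro X Y
    apply Set.Subset.antisymm
    · rintro U ⟨hUX, hUY⟩
      have h2 : U * U ∈ radClosure zero Tri Summand {X * Y} :=
        mul_mem_rad zero Tri Summand tensor_zero tri_tensor summand_tensor hUX hUY
      have h3 : U ^ 2 ∈ radClosure zero Tri Summand {X * Y} := by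
        rw [pow_two]; exact h2
      exact (radIdeal zero Tri Summand {X * Y}).radical (by norm_num) h3
    · intro U hU
      constructor
      · refine radClosure_subset zero Tri Summand (radIdeal zero Tri Summand {X}) ?_ hU
        intro z hz
        rw [Set.mem_singleton_iff] at hz
        subst hz
        have hX : X ∈ radClosure zero Tri Summand {X} :=
          subset_radClosure zero Tri Summand _ rfl
        have := (radIdeal zero Tri Summand {X}).tensor_mem Y hX
        show X * Y ∈ radClosure zero Tri Summand {X}
        rwa [mul_comm]
      · refine radClosure_subset zero Tri Summand (radIdeal zero Tri Summand {Y}) ?_ hU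
        intro z hz
        rw [Set.mem_singleton_iff] at hz
        subst hz
        have hY : Y ∈ radClosure zero Tri Summand {Y} :=
          subset_radClosure zero Tri Summand _ rfl
        exact (radIdeal zero Tri Summand {Y}).tensor_mem X hY
  · intro X S hXS
    set U : Set C := ⋃ J ∈ S, J.carrier with hU
    have hXmem : X ∈ radClosure zero Tri Summand U :=
      hXS (subset_radClosure zero Tri Summand _ rfl)
    have hsub : radClosure zero Tri Summand U ⊆ (finUnionIdeal zero Tri Summand U).carrier := by
      refine radClosure_subset zero Tri Summand _ ?_
      intro u hu
      exact ⟨{u}, Set.singleton_subset_iff.2 hu, Set.finite_singleton u,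
        subset_radClosure zero Tri Summand _ rfl⟩
    obtain ⟨F, hFU, hFfin, hXF⟩ := hsub hXmem
    have hNE : Nonempty (RadicalThickTensorIdeal C zero Tri Summand) :=
      ⟨radIdeal zero Tri Summand ∅⟩
    have hch : ∀ f ∈ F, ∃ J : RadicalThickTensorIdeal C zero Tri Summand,
        J ∈ S ∧ f ∈ J.carrier := by
      intro f hf
      have := hFU hf
      rw [hU] at this
      simp only [Set.mem_iUnion] at this
      obtain ⟨J, hJ, hfJ⟩ := this
      exact ⟨J, hJ, hfJ⟩
    choose! g hg1 hg2 using hch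
    refine ⟨g '' F, ?_, hFfin.image g, ?_⟩
    · rintro J ⟨f, hf, rfl⟩
      exact hg1 f hf
    · have hFsub : F ⊆ ⋃ J ∈ g '' F, J.carrier := by
        intro f hf
        simp only [Set.mem_iUnion]
        exact ⟨g f, ⟨f, hf, rfl⟩, hg2 f hf⟩
      have h4 : radClosure zero Tri Summand {X} ⊆ radClosure zero Tri Summand F := by
        refine radClosure_subset zero Tri Summand (radIdeal zero Tri Summand F) ?_
        intro z hz
        rw [Set.mem_singleton_iff] at hz
        subst hz
        exact hXF
      exact h4.trans (radClosure_mono zero Tri Summand hFsub)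
  · intro I
    exact Set.Subset.antisymm (radClosure_subset zero Tri Summand I subset_rfl)
      (subset_radClosure zero Tri Summand _)
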